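/- The system of equations a₀ + ((d₂+8)/(d₂+16))p = 1, a₀ = -(d₂(d₂+2)/(16d₁))a₁ + (d₂(d₂+2) - 2d₁(d₂+8))/(16 a₁ d₁) + (d₂+16)/8, 6a₀ - (d₂+2)a₁ + d₂ - 4 = 0 with (d₁, d₂) = (133, 112) has exactly two real solutions with a₁ ≠ 0: (a₀, a₁, p) = (1, 1, 0) and (a₀, a₁, p) = (-279/25, 9/25, 4864/375). -/

import Mathlib

/-- The m-quasi-Einstein system for E₈ with (d₁, d₂) = (133, 112) has exactly the two
solutions (a₀, a₁, p) = (1, 1, 0) and (a₀, a₁, p) = (-279 / 25, 9 / 25, 4864 / 375) with a₁ ≠ 0. -/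
theorem stmt19 (a₀ a₁ p : ℝ) (ha₁ : a₁ ≠ 0) :
    (a₀ + (((112 : ℝ) + 8) / (112 + 16)) * p = 1 ∧
      a₀ = -(((112 : ℝ) * (112 + 2)) / (16 * 133)) * a₁
            + ((112 : ℝ) * (112 + 2) - 2 * 133 * (112 + 8)) / (16 * a₁ * 133)
            + ((112 : ℝ) + 16) / 8 ∧
      6 * a₀ - ((112 : ℝ) + 2) * a₁ + 112 - 4 = 0) ↔
      ((a₀, a₁, p) = (1, 1, 0) ∨ (a₀, a₁, p) = (-279 / 25, 9 / 25, 4864 / 375)) := by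
  constructor
  · rintro ⟨h1, h2, h3⟩
    field_simp at h2
    have key : (a₁ - 1) * (25 * a₁ - 9) = 0 := by linear_combination h2 / 17024 - a₁/6 * h3
    rcases mul_eq_zero.mp key with h | h
    · left
      have ha : a₁ = 1 := by linarith
      have h0 : a₀ = 1 := by rw [ha] at h3; linarith
      have hp : p = 0 := by rw [h0] at h1; linarith
      simp [ha, h0, hp]
    · right
      have ha : a₁ = 9 / 25 := by linarith
      have h0 : a₀ = -279 / 25 := by rw [ha] at h3; linarith
      have hp : p = 4864 / 375 := by rw [h0] at h1; linarith
      simp [ha, h0, hp]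
  · rintro (h | h) <;>
    · obtain ⟨h0, h1, hp⟩ := Prod.mk.injEq .. ▸ h
      simp_all
      norm_num
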